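/- arXiv:math/0108164 — 2 statements merged into one kernel-verified Lean document; each statement's English description precedes it below -/
import Mathlib

section
/- For a partition σ of m with beta numbers β_1 > β_2 > ··· > β_L ≥ 0 (where β_i = σ_i + L − i and L ≥ ℓ(σ)), the product of (q^{h} − 1) over all hook lengths h of σ equals (Π_{i=1}^L Π_{k=1}^{β_i}(q^k − 1)) / (Π_{1 ≤ i < j ≤ L}(q^{β_i − β_j} − 1)). -/
open Finset

private lemma icc_eq_image_succ (n : ℕ) :
    Finset.Icc 1 n = (Finset.range n).image (· + 1) := by
  ext k
  simp only [mem_Icc, mem_image, mem_range]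
  constructor
  · rintro ⟨h1, h2⟩; exact ⟨k - 1, by omega, by omega⟩
  · rintro ⟨a, ha, rfl⟩; omega

private lemma row_identity {M : Type*} [CommMonoid M] (f : ℕ → M) (σ : ℕ → ℕ) (L : ℕ)
    (hanti : ∀ i j, i ≤ j → σ j ≤ σ i) (i : ℕ) (hi : i < L) :
    (∏ j ∈ Finset.range (σ i),
        f (σ i + ((Finset.range L).filter (fun i' => j < σ i')).card - (i + j + 1))) *
      (∏ j ∈ Finset.Ioo i L, f ((σ i + (L - 1 - i)) - (σ j + (L - 1 - j)))) =
      ∏ k ∈ Finset.range (σ i + (L - 1 - i)), f (k + 1) := by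
  set c : ℕ → ℕ := fun j => ((Finset.range L).filter (fun i' => j < σ i')).card with hc
  set b : ℕ → ℕ := fun j => σ j + (L - 1 - j) with hb
  set g : ℕ → ℕ := fun j => σ i + c j - (i + j + 1) with hg
  set g2 : ℕ → ℕ := fun j => b i - b j with hg2
  -- basic facts about c
  have hcL : ∀ j, c j ≤ L := by
    intro j
    simp only [hc]
    exact le_trans (card_filter_le _ _) (by simp)
  have hcge : ∀ j, j < σ i → i + 1 ≤ c j := by
    intro j hj
    have hsub : Finset.range (i + 1) ⊆ (Finset.range L).filter (fun i' => j < σ i') := by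
      intro x hx
      simp only [mem_range] at hx
      simp only [mem_filter, mem_range]
      exact ⟨by omega, lt_of_lt_of_le hj (hanti x i (by omega))⟩
    simpa using card_le_card hsub
  have hcanti : ∀ j1 j2, j1 ≤ j2 → c j2 ≤ c j1 := by
    intro j1 j2 h
    apply card_le_card
    intro x hx
    simp only [mem_filter] at hx ⊢
    exact ⟨hx.1, by omega⟩
  have hdich : ∀ j j', j' < L → (j < σ j' ∧ j' + 1 ≤ c j) ∨ (σ j' ≤ j ∧ c j ≤ j') := by
    intro j j' hj'
    by_cases h : j < σ j'
    · left
      refine ⟨h, ?_⟩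
      have hsub : Finset.range (j' + 1) ⊆ (Finset.range L).filter (fun i' => j < σ i') := by
        intro x hx
        simp only [mem_range] at hx
        simp only [mem_filter, mem_range]
        exact ⟨by omega, lt_of_lt_of_le h (hanti x j' (by omega))⟩
      simpa using card_le_card hsub
    · right
      refine ⟨by omega, ?_⟩
      have hsub : (Finset.range L).filter (fun i' => j < σ i') ⊆ Finset.range j' := by
        intro x hx
        simp only [mem_filter, mem_range] at hx
        simp only [mem_range]
        by_contra hxx
        exact h (lt_of_lt_of_le hx.2 (hanti j' x (by omega)))
      simpa using card_le_card hsub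
  have hbanti : ∀ j1 j2, j1 < j2 → j2 < L → b j2 < b j1 := by
    intro j1 j2 h hL
    have := hanti j1 j2 (le_of_lt h)
    simp only [hb]; omega
  -- strict antitonicity of g on range (σ i)
  have hglt : ∀ j1 j2, j1 < j2 → j2 < σ i → g j2 < g j1 := by
    intro j1 j2 h h2
    have h1 := hcge j1 (by omega)
    have h2' := hcge j2 h2
    have h3 := hcanti j1 j2 (le_of_lt h)
    simp only [hg]; omega
  have hginj : Set.InjOn g (Finset.range (σ i)) := by
    intro a ha b' hb'
    simp only [coe_range, Set.mem_Iio] at ha hb'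
    intro hab
    rcases lt_trichotomy a b' with h | h | h
    · exact absurd hab (ne_of_gt (hglt a b' h hb'))
    · exact h
    · exact absurd hab (ne_of_lt (hglt b' a h ha))
  have hg2inj : Set.InjOn g2 (Finset.Ioo i L) := by
    intro a ha b' hb'
    simp only [coe_Ioo, Set.mem_Ioo] at ha hb'
    intro hab
    have hbi : ∀ x, i < x → x < L → b x < b i := fun x h1 h2 => hbanti i x h1 h2
    rcases lt_trichotomy a b' with h | h | h
    · have h1 := hbanti a b' h hb'.2
      have h2 := hbi a ha.1 ha.2
      simp only [hg2] at hab; omega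
    · exact h
    · have h1 := hbanti b' a h ha.2
      have h2 := hbi b' hb'.1 hb'.2
      simp only [hg2] at hab; omega
  -- bounds
  have hgmem : ∀ j, j < σ i → g j ∈ Finset.Icc 1 (b i) := by
    intro j hj
    have h1 := hcge j hj
    have h2 := hcL j
    simp only [mem_Icc, hg, hb]; omega
  have hg2mem : ∀ j, j ∈ Finset.Ioo i L → g2 j ∈ Finset.Icc 1 (b i) := by
    intro j hj
    simp only [mem_Ioo] at hj
    have := hbanti i j hj.1 hj.2
    simp only [mem_Icc, hg2]; omega
  -- disjointness
  have hdisj : Disjoint ((Finset.range (σ i)).image g) ((Finset.Ioo i L).image g2) := by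
    rw [Finset.disjoint_left]
    rintro k hk1 hk2
    simp only [mem_image, mem_range, mem_Ioo] at hk1 hk2
    obtain ⟨j, hj, hgj⟩ := hk1
    obtain ⟨j', hj', hgj'⟩ := hk2
    have h1 := hcge j hj
    have h2 := hcL j
    have h3 := hanti i j' (le_of_lt hj'.1)
    have h4 := hdich j j' hj'.2
    have h5 := hj'.1
    have h6 := hj'.2
    simp only [hg] at hgj
    simp only [hg2, hb] at hgj'
    omega
  -- the union is Icc 1 (b i)
  have hunion : (Finset.range (σ i)).image g ∪ (Finset.Ioo i L).image g2
      = Finset.Icc 1 (b i) := by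
    apply Finset.eq_of_subset_of_card_le
    · intro k hk
      simp only [mem_union, mem_image, mem_range] at hk
      rcases hk with ⟨j, hj, rfl⟩ | ⟨j, hj, rfl⟩
      · exact hgmem j hj
      · exact hg2mem j hj
    · rw [Finset.card_union_of_disjoint hdisj,
        Finset.card_image_of_injOn hginj, Finset.card_image_of_injOn hg2inj]
      simp only [Nat.card_Icc, Nat.card_Ioo, card_range, hb]
      omega
  -- put it together
  have hA : ∏ j ∈ Finset.range (σ i), f (g j)
      = ∏ k ∈ (Finset.range (σ i)).image g, f k := (Finset.prod_image
        (fun x hx y hy h => hginj (by simpa using hx) (by simpa using hy) h)).symm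
  have hB : ∏ j ∈ Finset.Ioo i L, f (g2 j)
      = ∏ k ∈ (Finset.Ioo i L).image g2, f k := (Finset.prod_image
        (fun x hx y hy h => hg2inj (by simpa using hx) (by simpa using hy) h)).symm
  calc (∏ j ∈ Finset.range (σ i), f (g j)) * ∏ j ∈ Finset.Ioo i L, f (g2 j)
      = (∏ k ∈ (Finset.range (σ i)).image g, f k)
          * ∏ k ∈ (Finset.Ioo i L).image g2, f k := by rw [hA, hB]
    _ = ∏ k ∈ (Finset.range (σ i)).image g ∪ (Finset.Ioo i L).image g2, f k :=
        (Finset.prod_union hdisj).symm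
    _ = ∏ k ∈ Finset.Icc 1 (b i), f k := by rw [hunion]
    _ = ∏ k ∈ Finset.range (b i), f (k + 1) := by
        rw [icc_eq_image_succ]
        exact Finset.prod_image (fun x _ y _ h => by omega)

/-- Hook-length product identity in terms of beta numbers: for a partition `σ` with
`L`-beta numbers `β_i = σ_i + L - i`,
`∏_{(i,j)∈[σ]} (q^{h_{ij}} - 1) · ∏_{i<j} (q^{β_i-β_j} - 1) = ∏_i ∏_{k=1}^{β_i} (q^k - 1)`
(the cross-multiplied form of the displayed quotient identity). -/
theorem hook_length_beta_identity {R : Type*} [CommRing R] (q : R)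
    (σ : ℕ → ℕ) (L : ℕ)
    (hanti : ∀ i j, i ≤ j → σ j ≤ σ i)
    (hvan : ∀ i, L ≤ i → σ i = 0) :
    (∏ i ∈ Finset.range L, ∏ j ∈ Finset.range (σ i),
        (q ^ (σ i + ((Finset.range L).filter (fun i' => j < σ i')).card - (i + j + 1)) - 1)) *
      (∏ i ∈ Finset.range L, ∏ j ∈ Finset.Ioo i L,
        (q ^ ((σ i + (L - 1 - i)) - (σ j + (L - 1 - j))) - 1))
      = ∏ i ∈ Finset.range L, ∏ k ∈ Finset.range (σ i + (L - 1 - i)),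
          (q ^ (k + 1) - 1) := by
  rw [← Finset.prod_mul_distrib]
  exact Finset.prod_congr rfl fun i hi =>
    row_identity (fun k => q ^ k - 1) σ L hanti i (Finset.mem_range.mp hi)
end

section
/- The trace form τ on the Ariki–Koike algebra satisfies, for x, y ∈ S_n and 0 ≤ c_i < r: τ(L_1^{c_1}···L_n^{c_n} T_x T_y) = q^{ℓ(x)} if all c_i = 0 and x = y^{−1}, and 0 otherwise. -/
/-- Number of inversions (= Coxeter length) of a permutation of `Fin n`. -/
def invLength {n : ℕ} (w : Equiv.Perm (Fin n)) : ℕ :=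
  ((Finset.univ : Finset (Fin n × Fin n)).filter (fun p => p.1 < p.2 ∧ w p.2 < w p.1)).card

/-- The adjacent transposition `s_i` (1-based), as a permutation of `Fin n`. -/
def adjSwap (n i : ℕ) : Equiv.Perm (Fin n) :=
  if h : 1 ≤ i ∧ i < n then Equiv.swap ⟨i - 1, by omega⟩ ⟨i, h.2⟩ else 1

lemma invLength_one {n : ℕ} : invLength (1 : Equiv.Perm (Fin n)) = 0 := by
  rw [invLength, Finset.card_eq_zero, Finset.filter_eq_empty_iff]
  rintro ⟨a, b⟩ -
  simp only [Equiv.Perm.one_apply, not_and]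
  exact fun h => not_lt.2 h.le

lemma invLength_inv {n : ℕ} (w : Equiv.Perm (Fin n)) : invLength w⁻¹ = invLength w := by
  classical
  unfold invLength
  apply Finset.card_nbij' (fun p => (w⁻¹ p.2, w⁻¹ p.1)) (fun p => (w p.2, w p.1)) <;>
    simp +contextual [Set.MapsTo, Set.LeftInvOn, Set.RightInvOn]

lemma swap_val {n : ℕ} (a b x : Fin n) :
    ((Equiv.swap a b x : Fin n) : ℕ)
      = if (x:ℕ) = (a:ℕ) then (b:ℕ) else if (x:ℕ) = (b:ℕ) then (a:ℕ) else (x:ℕ) := by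
  rw [Equiv.swap_apply_def]
  split_ifs with h1 h2 <;> simp_all [Fin.ext_iff]

lemma swap_adj_lt {n : ℕ} {a b : Fin n} (hab : (a:ℕ)+1 = (b:ℕ)) {p q : Fin n}
    (hpq : p < q) (hne : ¬(p = a ∧ q = b)) : Equiv.swap a b p < Equiv.swap a b q := by
  rw [Fin.lt_def, swap_val, swap_val]
  rw [Fin.lt_def] at hpq
  rw [not_and_or, Fin.ext_iff, Fin.ext_iff] at hne
  split_ifs <;> omega

lemma invLength_mul_swap {n : ℕ} (w : Equiv.Perm (Fin n)) (a b : Fin n)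
    (hab : (a:ℕ)+1 = (b:ℕ)) :
    (w a < w b → invLength (w * Equiv.swap a b) = invLength w + 1) ∧
    (w b < w a → invLength w = invLength (w * Equiv.swap a b) + 1) := by
  classical
  set s := Equiv.swap a b with hs
  have hlt : a < b := by rw [Fin.lt_def]; omega
  have hsa : s a = b := Equiv.swap_apply_left a b
  have hsb : s b = a := Equiv.swap_apply_right a b
  set S₁ := (Finset.univ : Finset (Fin n × Fin n)).filter
      (fun p => p.1 < p.2 ∧ (w * s) p.2 < (w * s) p.1) with hS₁
  set S₂ := (Finset.univ : Finset (Fin n × Fin n)).filter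
      (fun p => p.1 < p.2 ∧ w p.2 < w p.1) with hS₂
  have key : (S₁.erase (a, b)).card = (S₂.erase (a, b)).card := by
    apply Finset.card_nbij' (fun p => (s p.1, s p.2)) (fun p => (s p.1, s p.2))
    · rintro ⟨p, q⟩ hp
      simp only [Finset.mem_coe, Finset.mem_erase, hS₁, Finset.mem_filter, Finset.mem_univ, true_and] at hp
      simp only [Equiv.Perm.mul_apply] at hp
      obtain ⟨hne, hpq, hw⟩ := hp
      have hne' : ¬(p = a ∧ q = b) := by
        rintro ⟨rfl, rfl⟩; exact hne rfl
      have hlt' := swap_adj_lt hab hpq hne'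
      simp only [Finset.mem_coe, Finset.mem_erase, hS₂, Finset.mem_filter, Finset.mem_univ, true_and]
      refine ⟨?_, hlt', hw⟩
      rintro hpair
      have h1 : s p = a := (Prod.mk.injEq _ _ _ _ ▸ hpair).1
      have h2 : s q = b := (Prod.mk.injEq _ _ _ _ ▸ hpair).2
      have hp' : p = b := by rw [← hsa, ← h1, Equiv.swap_apply_self]
      have hq' : q = a := by rw [← hsb, ← h2, Equiv.swap_apply_self]
      rw [hp', hq'] at hpq
      exact absurd hpq (not_lt.2 hlt.le)
    · rintro ⟨p, q⟩ hp
      simp only [Finset.mem_coe, Finset.mem_erase, hS₂, Finset.mem_filter, Finset.mem_univ, true_and] at hp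
      obtain ⟨hne, hpq, hw⟩ := hp
      have hne' : ¬(p = a ∧ q = b) := by
        rintro ⟨rfl, rfl⟩; exact hne rfl
      have hlt' := swap_adj_lt hab hpq hne'
      simp only [Finset.mem_coe, Finset.mem_erase, hS₁, Finset.mem_filter, Finset.mem_univ, true_and]
      simp only [Equiv.Perm.mul_apply]
      have e1 : s (s p) = p := Equiv.swap_apply_self _ _ _
      have e2 : s (s q) = q := Equiv.swap_apply_self _ _ _
      refine ⟨?_, hlt', by rw [e1, e2]; exact hw⟩
      rintro hpair
      have h1 : s p = a := (Prod.mk.injEq _ _ _ _ ▸ hpair).1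
      have h2 : s q = b := (Prod.mk.injEq _ _ _ _ ▸ hpair).2
      have hp' : p = b := by rw [← hsa, ← h1, Equiv.swap_apply_self]
      have hq' : q = a := by rw [← hsb, ← h2, Equiv.swap_apply_self]
      rw [hp', hq'] at hpq
      exact absurd hpq (not_lt.2 hlt.le)
    · rintro ⟨p, q⟩ _
      exact Prod.ext (Equiv.swap_apply_self _ _ _) (Equiv.swap_apply_self _ _ _)
    · rintro ⟨p, q⟩ _
      exact Prod.ext (Equiv.swap_apply_self _ _ _) (Equiv.swap_apply_self _ _ _)
  have hmem1 : (a, b) ∈ S₁ ↔ w a < w b := by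
    rw [hS₁, Finset.mem_filter]
    simp [hlt, hsa, hsb]
  have hmem2 : (a, b) ∈ S₂ ↔ w b < w a := by
    simp [hS₂, hlt]
  have hinj := w.injective
  have hne : w a ≠ w b := fun h => absurd (hinj h) hlt.ne
  constructor
  · intro h
    have h1 : (a, b) ∈ S₁ := hmem1.2 h
    have h2 : (a, b) ∉ S₂ := fun hm => absurd h (not_lt.2 (hmem2.1 hm).le)
    have e1 : S₁.card = (S₁.erase (a,b)).card + 1 := (Finset.card_erase_add_one h1).symm
    have e2 : S₂.card = (S₂.erase (a,b)).card := by rw [Finset.erase_eq_of_notMem h2]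
    show S₁.card = S₂.card + 1
    rw [e1, e2, key]
  · intro h
    have h2 : (a, b) ∈ S₂ := hmem2.2 h
    have h1 : (a, b) ∉ S₁ := fun hm => absurd h (not_lt.2 (hmem1.1 hm).le)
    have e2 : S₂.card = (S₂.erase (a,b)).card + 1 := (Finset.card_erase_add_one h2).symm
    have e1 : S₁.card = (S₁.erase (a,b)).card := by rw [Finset.erase_eq_of_notMem h1]
    show S₂.card = S₁.card + 1
    rw [e1, e2, key]

lemma exists_descent {n : ℕ} (w : Equiv.Perm (Fin n)) (hw : w ≠ 1) :
    ∃ (a b : Fin n), (a:ℕ)+1 = (b:ℕ) ∧ w b < w a := by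
  by_contra h
  push_neg at h
  apply hw
  match n with
  | 0 => exact Equiv.ext (fun x => absurd x.2 (by omega))
  | Nat.succ m =>
    have hmono : StrictMono w := by
      rw [Fin.strictMono_iff_lt_succ]
      intro i
      have hadj : ((i.castSucc : Fin (m+1)) : ℕ) + 1 = (i.succ : ℕ) := by simp
      have := h i.castSucc i.succ hadj
      refine lt_of_le_of_ne this (fun he => ?_)
      have hv := congrArg Fin.val (w.injective he)
      omega
    let o : Fin (m+1) ≃o Fin (m+1) := { w with map_rel_iff' := hmono.le_iff_le }
    have : o = OrderIso.refl (Fin (m+1)) := Subsingleton.elim _ _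
    exact Equiv.ext fun x => congrArg (fun (f : Fin (m+1) ≃o Fin (m+1)) => f x) this

lemma adjSwap_eq {n i : ℕ} (h1 : 1 ≤ i) (h2 : i < n) :
    adjSwap n i = Equiv.swap ⟨i - 1, by omega⟩ ⟨i, h2⟩ := by
  rw [adjSwap, dif_pos ⟨h1, h2⟩]

lemma adjSwap_inv (n i : ℕ) : (adjSwap n i)⁻¹ = adjSwap n i := by
  rw [adjSwap]; split_ifs <;> simp

lemma adjSwap_sq {n i : ℕ} (h1 : 1 ≤ i) (h2 : i < n) :
    adjSwap n i * adjSwap n i = 1 := by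
  rw [adjSwap_eq h1 h2, Equiv.swap_mul_self]

lemma invLength_pos {n : ℕ} (w : Equiv.Perm (Fin n)) (hw : w ≠ 1) : 1 ≤ invLength w := by
  obtain ⟨a, b, hab, hlt⟩ := exists_descent w hw
  rw [invLength, Nat.one_le_iff_ne_zero, ← Nat.pos_iff_ne_zero, Finset.card_pos]
  refine ⟨(a, b), Finset.mem_filter.2 ⟨Finset.mem_univ _, ?_, hlt⟩⟩
  show a < b
  rw [Fin.lt_def]; omega

lemma invLength_adjSwap_right {n : ℕ} (w : Equiv.Perm (Fin n)) {i : ℕ}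
    (h1 : 1 ≤ i) (h2 : i < n) :
    invLength (w * adjSwap n i) = invLength w + 1 ∨
      invLength w = invLength (w * adjSwap n i) + 1 := by
  rw [adjSwap_eq h1 h2]
  set a : Fin n := ⟨i - 1, by omega⟩
  set b : Fin n := ⟨i, h2⟩
  have hab : (a:ℕ) + 1 = (b:ℕ) := by simp [a, b]; omega
  have h := invLength_mul_swap w a b hab
  rcases lt_trichotomy (w a) (w b) with h' | h' | h'
  · exact Or.inl (h.1 h')
  · exact absurd (w.injective h') (by rw [Fin.ext_iff]; simp [a, b]; omega)
  · exact Or.inr (h.2 h')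

lemma invLength_adjSwap_left {n : ℕ} (w : Equiv.Perm (Fin n)) {i : ℕ}
    (h1 : 1 ≤ i) (h2 : i < n) :
    invLength (adjSwap n i * w) = invLength w + 1 ∨
      invLength w = invLength (adjSwap n i * w) + 1 := by
  have key : invLength (adjSwap n i * w) = invLength (w⁻¹ * adjSwap n i) := by
    rw [← invLength_inv (adjSwap n i * w), mul_inv_rev, adjSwap_inv]
  rw [key, ← invLength_inv w]
  exact invLength_adjSwap_right w⁻¹ h1 h2

lemma exists_right_descent {n : ℕ} (w : Equiv.Perm (Fin n)) (hw : w ≠ 1) :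
    ∃ i : ℕ, 1 ≤ i ∧ i < n ∧ invLength w = invLength (w * adjSwap n i) + 1 := by
  obtain ⟨a, b, hab, hlt⟩ := exists_descent w hw
  refine ⟨(a:ℕ) + 1, le_add_self, by omega, ?_⟩
  have heq : adjSwap n ((a:ℕ)+1) = Equiv.swap a b := by
    rw [adjSwap_eq le_add_self (by omega : (a:ℕ)+1 < n)]
    congr 1 <;> rw [Fin.ext_iff] <;> simp <;> omega
  rw [heq]
  exact (invLength_mul_swap w a b hab).2 hlt

lemma exists_left_descent {n : ℕ} (w : Equiv.Perm (Fin n)) (hw : w ≠ 1) :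
    ∃ i : ℕ, 1 ≤ i ∧ i < n ∧ invLength w = invLength (adjSwap n i * w) + 1 := by
  obtain ⟨i, h1, h2, h3⟩ := exists_right_descent w⁻¹ (by simpa using hw)
  refine ⟨i, h1, h2, ?_⟩
  have key : invLength (adjSwap n i * w) = invLength (w⁻¹ * adjSwap n i) := by
    rw [← invLength_inv (adjSwap n i * w), mul_inv_rev, adjSwap_inv]
  rw [key, ← invLength_inv w]
  exact h3

/-- The trace form `τ` of the Ariki–Koike algebra satisfies
`τ(L_1^{c_1}⋯L_n^{c_n} T_x T_y) = q^{ℓ(x)}` if all `c_i = 0` and `x = y⁻¹`, and `= 0`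
otherwise. -/
theorem tau_on_products
    {R : Type*} [CommRing R] [IsDomain R]
    {H : Type*} [Ring H] [Algebra R H]
    (n r : ℕ) (q qi : R) (hq : q * qi = 1) (Q : Fin r → R)
    (T : ℕ → H)
    (hrel0 : (List.ofFn (fun s : Fin r => T 0 - algebraMap R H (Q s))).prod = 0)
    (hrel1 : T 0 * T 1 * T 0 * T 1 = T 1 * T 0 * T 1 * T 0)
    (hrel2 : ∀ i, 1 ≤ i → i + 1 ≤ n → (T i + algebraMap R H q) * (T i - 1) = 0)
    (hrel3 : ∀ i, 1 ≤ i → i + 2 ≤ n → T (i + 1) * T i * T (i + 1) = T i * T (i + 1) * T i)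
    (hrel4 : ∀ i j, i + 1 < j → j + 1 ≤ n → T i * T j = T j * T i)
    (L : ℕ → H)
    (hL1 : L 1 = T 0)
    (hLrec : ∀ m, 1 ≤ m → L (m + 1) = qi • (T m * L m * T m))
    (Tw : Equiv.Perm (Fin n) → H)
    (hTw1 : Tw 1 = 1)
    (hTwmul : ∀ (w : Equiv.Perm (Fin n)) (i : ℕ), 1 ≤ i → i < n →
      invLength (adjSwap n i * w) = invLength w + 1 →
      Tw (adjSwap n i * w) = Tw w * T i)
    (τ : H →ₗ[R] R)
    (hτval : ∀ (c : Fin n → ℕ), (∀ k, c k < r) → ∀ w : Equiv.Perm (Fin n),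
      τ (((List.finRange n).map (fun k => L (k.val + 1) ^ c k)).prod * Tw w)
        = if (∀ k, c k = 0) ∧ w = 1 then 1 else 0)
    (hτtr : ∀ h₁ h₂ : H, τ (h₁ * h₂) = τ (h₂ * h₁)) :
    ∀ (c : Fin n → ℕ), (∀ k, c k < r) → ∀ x y : Equiv.Perm (Fin n),
      τ (((List.finRange n).map (fun k => L (k.val + 1) ^ c k)).prod * Tw x * Tw y)
        = if (∀ k, c k = 0) ∧ x = y⁻¹ then q ^ invLength x else 0 := by
  -- derived left-multiplication rule for `Tw`
  have TwL : ∀ (N : ℕ) (w : Equiv.Perm (Fin n)) (i : ℕ), invLength w ≤ N → 1 ≤ i → i < n →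
      invLength (w * adjSwap n i) = invLength w + 1 → Tw (w * adjSwap n i) = T i * Tw w := by
    intro N
    induction N with
    | zero =>
      intro w i hN h1 h2 hinc
      have hw1 : w = 1 := by
        by_contra hw
        exact absurd hN (by have := invLength_pos w hw; omega)
      subst hw1
      rw [one_mul] at hinc ⊢
      have h := hTwmul 1 i h1 h2 (by rw [mul_one]; exact hinc)
      rw [mul_one] at h
      rw [h, hTw1, one_mul, mul_one]
    | succ N IH =>
      intro w i hN h1 h2 hinc
      by_cases hw : w = 1
      · subst hw
        rw [one_mul] at hinc ⊢
        have h := hTwmul 1 i h1 h2 (by rw [mul_one]; exact hinc)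
        rw [mul_one] at h
        rw [h, hTw1, one_mul, mul_one]
      · obtain ⟨j, hj1, hj2, hj3⟩ := exists_left_descent w hw
        set s := adjSwap n j with hs
        set w' := s * w with hw'def
        have hww : w = s * w' := by
          rw [hw'def, ← mul_assoc, adjSwap_sq hj1 hj2, one_mul]
        have hlw' : invLength w = invLength w' + 1 := hj3
        have hTww : Tw w = Tw w' * T j := by
          rw [hww]
          exact hTwmul w' j hj1 hj2 (by rw [← hww]; exact hlw')
        have hcomp : w * adjSwap n i = s * (w' * adjSwap n i) := by
          rw [hww, mul_assoc]
        have step1 : invLength (w' * adjSwap n i) = invLength w' + 1 := by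
          rcases invLength_adjSwap_right w' h1 h2 with h | h
          · exact h
          · exfalso
            have hd := invLength_adjSwap_left (w' * adjSwap n i) hj1 hj2
            rw [← hcomp] at hd
            rcases hd with hd | hd <;> omega
        have step2 : Tw (w * adjSwap n i) = Tw (w' * adjSwap n i) * T j := by
          rw [hcomp]
          exact hTwmul (w' * adjSwap n i) j hj1 hj2 (by rw [← hcomp, hinc, hlw', step1])
        have hIH : Tw (w' * adjSwap n i) = T i * Tw w' :=
          IH w' i (by omega) h1 h2 step1
        rw [step2, hIH, mul_assoc, ← hTww]
  -- quadratic relation, in a convenient form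
  have Tsq : ∀ i : ℕ, 1 ≤ i → i < n → ∀ z : H,
      z * T i * T i = z * T i - q • (z * T i) + q • z := by
    intro i h1 h2 z
    have h := hrel2 i h1 (by omega)
    have h2' : (T i + algebraMap R H q) * (T i - 1)
        = T i * T i + algebraMap R H q * T i - T i - algebraMap R H q := by noncomm_ring
    rw [h2'] at h
    have h4 : T i * T i + algebraMap R H q * T i - T i = algebraMap R H q := by
      rwa [sub_eq_zero] at h
    have hTT : T i * T i = T i - algebraMap R H q * T i + algebraMap R H q := by
      calc T i * T i
          = (T i * T i + algebraMap R H q * T i - T i) + T i - algebraMap R H q * T i := by abel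
        _ = algebraMap R H q + T i - algebraMap R H q * T i := by rw [h4]
        _ = T i - algebraMap R H q * T i + algebraMap R H q := by abel
    calc z * T i * T i = z * (T i * T i) := by rw [mul_assoc]
      _ = z * (T i - algebraMap R H q * T i + algebraMap R H q) := by rw [hTT]
      _ = z * T i - z * algebraMap R H q * T i + z * algebraMap R H q := by noncomm_ring
      _ = z * T i - q • (z * T i) + q • z := by
          rw [← Algebra.commutes q z, mul_assoc, ← Algebra.smul_def, ← Algebra.smul_def]
  intro c hc x y
  set A := ((List.finRange n).map (fun k => L (k.val + 1) ^ c k)).prod with hA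
  have base : ∀ x : Equiv.Perm (Fin n), τ (A * Tw x * Tw 1)
      = if (∀ k, c k = 0) ∧ x = (1 : Equiv.Perm (Fin n))⁻¹ then q ^ invLength x else 0 := by
    intro x
    rw [hTw1, mul_one, hτval c hc x, inv_one]
    by_cases hcond : (∀ k, c k = 0) ∧ x = 1
    · rw [if_pos hcond, if_pos hcond, hcond.2, invLength_one, pow_zero]
    · rw [if_neg hcond, if_neg hcond]
  suffices h : ∀ (N : ℕ) (x y : Equiv.Perm (Fin n)), invLength y ≤ N →
      τ (A * Tw x * Tw y) = if (∀ k, c k = 0) ∧ x = y⁻¹ then q ^ invLength x else 0 by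
    exact h (invLength y) x y le_rfl
  intro N
  induction N with
  | zero =>
    intro x y hN
    have hy1 : y = 1 := by
      by_contra hy
      exact absurd hN (by have := invLength_pos y hy; omega)
    subst hy1
    exact base x
  | succ N IH =>
    intro x y hN
    by_cases hy : y = 1
    · subst hy; exact base x
    · obtain ⟨i, hi1, hi2, hi3⟩ := exists_right_descent y hy
      set s := adjSwap n i with hs
      set y' := y * s with hy'def
      have hys : y = y' * s := by
        rw [hy'def, mul_assoc, adjSwap_sq hi1 hi2, mul_one]
      have hly : invLength y = invLength y' + 1 := hi3
      have hTwy : Tw y = T i * Tw y' := by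
        rw [hys]
        exact TwL N y' i (by omega) hi1 hi2 (by rw [← hys]; exact hly)
      have hinv : y'⁻¹ = s * y⁻¹ := by
        rw [hy'def, mul_inv_rev, hs, adjSwap_inv]
      rw [hTwy]
      rcases invLength_adjSwap_left x hi1 hi2 with hx | hx
      · -- length of s*x goes up
        have hxs : invLength (s * x) = invLength x + 1 := hx
        have hTsx : Tw (s * x) = Tw x * T i := hTwmul x i hi1 hi2 hx
        have hre : A * Tw x * (T i * Tw y') = A * Tw (s * x) * Tw y' := by
          rw [hTsx]; noncomm_ring
        rw [hre, IH (s * x) y' (by omega)]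
        have hfalse : ¬ (s * x = y'⁻¹) := by
          intro he
          have hx2 : x = y⁻¹ := by
            rw [hinv] at he
            exact mul_left_cancel he
          have e1 : invLength (s * x) = invLength y' := by rw [he, invLength_inv]
          have e2 : invLength x = invLength y := by rw [hx2, invLength_inv]
          omega
        have hfalse2 : ¬ (x = y⁻¹) := by
          intro he
          exact hfalse (by rw [he, hinv])
        rw [if_neg (fun h => hfalse h.2), if_neg (fun h => hfalse2 h.2)]
      · -- length of s*x goes down
        set x' := s * x with hx'def
        have hxx : x = s * x' := by
          rw [hx'def, ← mul_assoc, adjSwap_sq hi1 hi2, one_mul]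
        have hlx : invLength x = invLength x' + 1 := hx
        have hTwx : Tw x = Tw x' * T i := by
          rw [hxx]
          exact hTwmul x' i hi1 hi2 (by rw [← hxx]; exact hlx)
        have e0 : A * Tw x' * T i = A * Tw x := by rw [hTwx, mul_assoc]
        have key : A * Tw x * T i = A * Tw x - q • (A * Tw x) + q • (A * Tw x') := by
          have h := Tsq i hi1 hi2 (A * Tw x')
          rw [e0] at h
          exact h
        calc τ (A * Tw x * (T i * Tw y'))
            = τ ((A * Tw x * T i) * Tw y') := by rw [← mul_assoc]
          _ = τ ((A * Tw x - q • (A * Tw x) + q • (A * Tw x')) * Tw y') := by rw [key]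
          _ = τ (A * Tw x * Tw y') - q * τ (A * Tw x * Tw y')
              + q * τ (A * Tw x' * Tw y') := by
              rw [add_mul, sub_mul, smul_mul_assoc, smul_mul_assoc, map_add, map_sub,
                map_smul, map_smul, smul_eq_mul, smul_eq_mul]
          _ = if (∀ k, c k = 0) ∧ x = y⁻¹ then q ^ invLength x else 0 := by
              rw [IH x y' (by omega), IH x' y' (by omega)]
              have hxne : ¬ (x = y'⁻¹) := by
                intro he
                have e1 : invLength x = invLength y' := by rw [he, invLength_inv]
                have e2 : x' = y⁻¹ := by
                  rw [hx'def, he, hinv, ← mul_assoc, adjSwap_sq hi1 hi2, one_mul]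
                have e3 : invLength x' = invLength y := by rw [e2, invLength_inv]
                omega
              have hiff : x' = y'⁻¹ ↔ x = y⁻¹ := by
                rw [hx'def, hinv]
                exact mul_right_inj s
              rw [if_neg (fun h => hxne h.2)]
              by_cases hcnd : (∀ k, c k = 0) ∧ x = y⁻¹
              · rw [if_pos ⟨hcnd.1, hiff.2 hcnd.2⟩, if_pos hcnd, hlx, pow_succ]
                ring
              · rw [if_neg (fun h => hcnd ⟨h.1, hiff.1 h.2⟩), if_neg hcnd]
                ring
end
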